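/- For r ≥ 3 and C > 0, the function ũ(z) = (r²(r−2)|z|^{2/r} + C)^{−1/(r−2)} on the punctured unit disc belongs to the weighted Sobolev space L^p₁ (with weight |z|^{−q p}, q = 1/r, i.e., ∫_{B₁}(|ũ|^p + |∂ũ|^p + |∂̄ũ|^p)|z|^{−p/r} < ∞) if and only if p < 2/(1 − 1/r). -/

import Mathlib

open MeasureTheory

/-- The Wirtinger operator `∂ = (∂_x − i ∂_y)/2`. -/
noncomputable def dzOp (f : ℂ → ℂ) (z : ℂ) : ℂ :=
  (fderiv ℝ f z 1 - Complex.I * fderiv ℝ f z Complex.I) / 2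

/-- The Wirtinger operator `∂̄ = (∂_x + i ∂_y)/2`. -/
noncomputable def dbarOp (f : ℂ → ℂ) (z : ℂ) : ℂ :=
  (fderiv ℝ f z 1 + Complex.I * fderiv ℝ f z Complex.I) / 2

section Aux

open Real Set


lemma rect_fst_integrable_iff (h : ℝ → ℝ) (hm : Measurable h) :
    IntegrableOn (fun p : ℝ × ℝ => h p.1) (Ioo (0:ℝ) 1 ×ˢ Ioo (-π) π) ↔
      IntegrableOn h (Ioo (0:ℝ) 1) := by
  have hprod : (volume : Measure (ℝ × ℝ)).restrict (Ioo (0:ℝ) 1 ×ˢ Ioo (-π) π)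
      = (volume.restrict (Ioo (0:ℝ) 1)).prod (volume.restrict (Ioo (-π) π)) := by
    rw [Measure.volume_eq_prod, Measure.prod_restrict]
  rw [IntegrableOn, hprod]
  constructor
  · intro H
    have h2 := H.integral_norm_prod_left
    have hμ : (volume.restrict (Ioo (-π) π)) univ = ENNReal.ofReal (2 * π) := by
      simp [Real.volume_Ioo, two_mul]
    have heq : (fun x => ∫ _y, ‖h x‖ ∂(volume.restrict (Ioo (-π) π)))
        = fun x => (2 * π) * ‖h x‖ := by
      funext x
      rw [integral_const, measureReal_def, hμ]
      simp [ENNReal.toReal_ofReal (by positivity : (0:ℝ) ≤ 2 * π), smul_eq_mul, Real.pi_nonneg]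
    rw [heq] at h2
    have h3 : Integrable (fun x => ‖h x‖) (volume.restrict (Ioo (0:ℝ) 1)) := by
      have h4 := h2.const_mul ((2 * π)⁻¹)
      refine h4.congr (Filter.Eventually.of_forall fun x => ?_)
      field_simp
    exact (integrable_norm_iff hm.aestronglyMeasurable).mp h3
  · intro H
    have := Integrable.mul_prod H (integrable_const (1:ℝ)) (ν := volume.restrict (Ioo (-π) π))
    simpa using this

set_option maxHeartbeats 1000000 in
lemma model_plane (t : ℝ) :
    IntegrableOn (fun p : ℝ × ℝ => Real.sqrt (p.1 ^ 2 + p.2 ^ 2) ^ t)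
      {p : ℝ × ℝ | Real.sqrt (p.1 ^ 2 + p.2 ^ 2) < 1} ↔ -2 < t := by
  set n : ℝ × ℝ → ℝ := fun p => Real.sqrt (p.1 ^ 2 + p.2 ^ 2) with hn
  have hncont : Continuous n := ((continuous_fst.pow 2).add (continuous_snd.pow 2)).sqrt
  set D : Set (ℝ × ℝ) := {p | n p < 1} with hD
  have hDm : MeasurableSet D := measurableSet_lt hncont.measurable measurable_const
  -- source is a.e. everything
  have hnull : volume polarCoord.sourceᶜ = 0 := by
    have := polarCoord_source_ae_eq_univ
    rwa [ae_eq_univ] at this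
  have hae : ∀ᵐ x : ℝ × ℝ, x ∈ polarCoord.source := by
    rw [ae_iff]; exact hnull
  have hsetae : (polarCoord.source ∩ D : Set (ℝ × ℝ)) =ᵐ[volume] D := by
    filter_upwards [hae] with x hx
    change (x ∈ polarCoord.source ∩ D) = (x ∈ D)
    rw [eq_iff_iff]
    exact ⟨fun h => h.2, fun h => ⟨hx, h⟩⟩
  -- the rectangle
  set S : Set (ℝ × ℝ) := Ioo (0:ℝ) 1 ×ˢ Ioo (-π) π with hS
  have hSm : MeasurableSet S := (measurableSet_Ioo.prod measurableSet_Ioo)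
  have hSsub : S ⊆ polarCoord.target := by
    rintro ⟨a, b⟩ ⟨ha, hb⟩
    exact ⟨Ioo_subset_Ioi_self ha, hb⟩
  -- image
  have himg : polarCoord.symm '' S = polarCoord.source ∩ D := by
    rw [polarCoord.symm_image_eq_source_inter_preimage hSsub]
    ext x
    simp only [mem_inter_iff, mem_preimage, and_congr_right_iff]
    intro hx
    have hx2 := polarCoord.map_source hx
    rw [polarCoord_target] at hx2
    constructor
    · rintro ⟨h1, _⟩
      exact h1.2
    · intro hxD
      refine ⟨⟨hx2.1, hxD⟩, hx2.2⟩
  -- derivative matrix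
  set B : ℝ × ℝ → ℝ × ℝ →L[ℝ] ℝ × ℝ := fun p =>
    LinearMap.toContinuousLinearMap (Matrix.toLin (Module.Basis.finTwoProd ℝ) (Module.Basis.finTwoProd ℝ)
      !![cos p.2, -p.1 * sin p.2; sin p.2, p.1 * cos p.2]) with hB
  have hBd : ∀ p ∈ S, HasFDerivWithinAt polarCoord.symm (B p) S p := fun p _ =>
    (hasFDerivAt_polarCoord_symm p).hasFDerivWithinAt
  have hBdet : ∀ p, (B p).det = p.1 := by
    intro p
    conv_rhs => rw [← one_mul p.1, ← cos_sq_add_sin_sq p.2]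
    simp only [hB, neg_mul, LinearMap.det_toContinuousLinearMap, LinearMap.det_toLin,
      Matrix.det_fin_two_of, sub_neg_eq_add]
    ring
  have hinj : InjOn polarCoord.symm S := by
    have := polarCoord.symm.injOn
    rw [polarCoord.symm_source] at this
    exact this.mono hSsub
  -- change of variables
  have hcov := integrableOn_image_iff_integrableOn_abs_det_fderiv_smul volume hSm hBd hinj
      (fun p : ℝ × ℝ => n p ^ t)
  rw [himg] at hcov
  have step1 : IntegrableOn (fun p : ℝ × ℝ => n p ^ t) D ↔
      IntegrableOn (fun p => |(B p).det| • (n (polarCoord.symm p)) ^ t) S := by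
    rw [IntegrableOn, ← Measure.restrict_congr_set hsetae, ← IntegrableOn, hcov]
  -- simplify the function on S
  have hfun : ∀ p ∈ S, |(B p).det| • (n (polarCoord.symm p)) ^ t = p.1 ^ (t + 1) := by
    rintro ⟨a, b⟩ ⟨ha, _⟩
    have ha0 : (0:ℝ) < a := ha.1
    have hna : n (polarCoord.symm (a, b)) = a := by
      simp only [hn, polarCoord_symm_apply]
      rw [mul_pow, mul_pow, ← mul_add, cos_sq_add_sin_sq, mul_one, Real.sqrt_sq ha0.le]
    rw [hBdet, hna, abs_of_pos ha0, smul_eq_mul, Real.rpow_add_one ha0.ne', mul_comm]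
  have step2 := integrableOn_congr_fun (μ := volume) hfun hSm
  have hmeas : Measurable (fun x : ℝ => x ^ (t+1)) := by fun_prop
  have step3 : IntegrableOn (fun p : ℝ × ℝ => p.1 ^ (t+1)) S ↔ -2 < t := by
    rw [hS, rect_fst_integrable_iff _ hmeas,
      intervalIntegral.integrableOn_Ioo_rpow_iff zero_lt_one]
    constructor <;> intro h <;> linarith
  exact step1.trans (step2.trans step3)

lemma model_complex (t : ℝ) :
    IntegrableOn (fun z : ℂ => ‖z‖ ^ t) (Metric.ball (0:ℂ) 1) ↔ -2 < t := by
  rw [← model_plane t]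
  set e := Complex.measurableEquivRealProd with he
  have hmp : MeasurePreserving e.symm volume volume :=
    Complex.volume_preserving_equiv_real_prod.symm e
  have habs : ∀ p : ℝ × ℝ, ‖e.symm p‖ = Real.sqrt (p.1 ^ 2 + p.2 ^ 2) := by
    intro p
    rw [he, Complex.measurableEquivRealProd_symm_apply, Complex.norm_def, Complex.normSq_mk]
    congr 1; ring
  have hpre : e.symm ⁻¹' (Metric.ball (0:ℂ) 1) = {p : ℝ × ℝ | Real.sqrt (p.1 ^ 2 + p.2 ^ 2) < 1} := by
    ext p
    simp only [Set.mem_preimage, Metric.mem_ball, Complex.dist_eq, sub_zero, Set.mem_setOf_eq]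
    rw [← habs p]
  have hemb : MeasurableEmbedding (e.symm : ℝ × ℝ → ℂ) := e.symm.measurableEmbedding
  have := ((hmp.restrict_preimage_emb hemb (Metric.ball (0:ℂ) 1)).integrable_comp_emb hemb
    (g := fun z : ℂ => ‖z‖ ^ t))
  rw [hpre] at this
  rw [IntegrableOn, ← this, IntegrableOn]
  constructor <;> intro H
  · have : ((fun z : ℂ => ‖z‖ ^ t) ∘ e.symm)
        = fun p : ℝ × ℝ => Real.sqrt (p.1 ^ 2 + p.2 ^ 2) ^ t := by
      funext p; simp [Function.comp, habs p]
    rwa [this] at H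
  · have : ((fun z : ℂ => ‖z‖ ^ t) ∘ e.symm)
        = fun p : ℝ × ℝ => Real.sqrt (p.1 ^ 2 + p.2 ^ 2) ^ t := by
      funext p; simp [Function.comp, habs p]
    rwa [this]

lemma abs_half_aux (a b : ℝ) (sgn : ℝ) (hsgn : sgn = 1 ∨ sgn = -1) :
    ‖((a : ℂ) + sgn • (Complex.I * (b : ℂ))) / 2‖ = Real.sqrt (a ^ 2 + b ^ 2) / 2 := by
  rw [norm_div, Complex.norm_two]
  congr 1
  rw [Complex.norm_def, Complex.normSq_apply]
  have hre : ((a : ℂ) + sgn • (Complex.I * (b : ℂ))).re = a := by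
    rcases hsgn with h | h <;> simp [h]
  have him : ((a : ℂ) + sgn • (Complex.I * (b : ℂ))).im = sgn * b := by
    rcases hsgn with h | h <;> simp [h]
  rw [hre, him]
  rcases hsgn with h | h <;> subst h <;> (congr 1; ring)

lemma radial_vals (A C e2 ν : ℝ) (hA : 0 < A) (hC : 0 < C) (he2 : 0 < e2)
    (u : ℂ → ℂ) (hu : u = fun z => (((A * ‖z‖ ^ e2 + C) ^ ν : ℝ) : ℂ))
    (z : ℂ) (hz : z ≠ 0) :
    ‖u z‖ = (A * ‖z‖ ^ e2 + C) ^ ν ∧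
    ‖dzOp u z‖ =
      |ν * (A * ‖z‖ ^ e2 + C) ^ (ν - 1) * (A * (e2 * ‖z‖ ^ (e2 - 1)))| / 2 ∧
    ‖dbarOp u z‖ =
      |ν * (A * ‖z‖ ^ e2 + C) ^ (ν - 1) * (A * (e2 * ‖z‖ ^ (e2 - 1)))| / 2 := by
  have hs : 0 < ‖z‖ := norm_pos_iff.mpr hz
  set s : ℝ := ‖z‖ with hsdef
  set Dv : ℝ := ν * (A * s ^ e2 + C) ^ (ν - 1) * (A * (e2 * s ^ (e2 - 1))) with hDv
  have hBpos : 0 < A * s ^ e2 + C := by positivity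
  -- derivative of the radial profile
  have hφ : HasDerivAt (fun x : ℝ => (A * x ^ e2 + C) ^ ν) Dv s := by
    have h1 : HasDerivAt (fun x : ℝ => A * x ^ e2 + C) (A * (e2 * s ^ (e2 - 1))) s :=
      ((Real.hasDerivAt_rpow_const (Or.inl hs.ne')).const_mul A).add_const C
    have h2 : HasDerivAt (fun y : ℝ => y ^ ν) (ν * (A * s ^ e2 + C) ^ (ν - 1)) (A * s ^ e2 + C) :=
      Real.hasDerivAt_rpow_const (Or.inl hBpos.ne')
    exact h2.comp s h1
  -- derivative of |·|
  have hq : HasFDerivAt (fun w : ℂ => w.re * w.re + w.im * w.im)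
      ((z.re • Complex.reCLM + z.re • Complex.reCLM) +
        (z.im • Complex.imCLM + z.im • Complex.imCLM)) z :=
    (Complex.reCLM.hasFDerivAt.mul Complex.reCLM.hasFDerivAt).add
      (Complex.imCLM.hasFDerivAt.mul Complex.imCLM.hasFDerivAt)
  have hqz : z.re * z.re + z.im * z.im = s ^ 2 := by
    rw [hsdef, Complex.sq_norm, Complex.normSq_apply]
  have hsqrt : HasDerivAt Real.sqrt (1 / (2 * s)) (z.re * z.re + z.im * z.im) := by
    have hrt : Real.sqrt (z.re * z.re + z.im * z.im) = s := by
      rw [hqz, Real.sqrt_sq hs.le]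
    have := Real.hasDerivAt_sqrt (x := z.re * z.re + z.im * z.im)
      (by rw [hqz]; positivity)
    rwa [hrt] at this
  have habs : HasFDerivAt (fun w : ℂ => ‖w‖)
      ((1 / (2 * s)) • ((z.re • Complex.reCLM + z.re • Complex.reCLM) +
        (z.im • Complex.imCLM + z.im • Complex.imCLM))) z := by
    have hfeq : (fun w : ℂ => ‖w‖)
        = fun w : ℂ => Real.sqrt (w.re * w.re + w.im * w.im) := by
      funext w; rw [Complex.norm_def, Complex.normSq_apply]
    rw [hfeq]
    exact hsqrt.comp_hasFDerivAt z hq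
  have hcomp : HasFDerivAt (fun w : ℂ => (A * ‖w‖ ^ e2 + C) ^ ν)
      (Dv • ((1 / (2 * s)) • ((z.re • Complex.reCLM + z.re • Complex.reCLM) +
        (z.im • Complex.imCLM + z.im • Complex.imCLM)))) z :=
    by have := hφ.comp_hasFDerivAt z habs; exact this
  have hU : HasFDerivAt u (Complex.ofRealCLM.comp
      (Dv • ((1 / (2 * s)) • ((z.re • Complex.reCLM + z.re • Complex.reCLM) +
        (z.im • Complex.imCLM + z.im • Complex.imCLM))))) z := by
    rw [hu]
    exact Complex.ofRealCLM.hasFDerivAt.comp z hcomp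
  have hf1 : fderiv ℝ u z 1 = ((Dv * z.re / s : ℝ) : ℂ) := by
    rw [hU.fderiv]
    simp only [ContinuousLinearMap.comp_apply, ContinuousLinearMap.smul_apply,
      ContinuousLinearMap.add_apply, Complex.reCLM_apply, Complex.imCLM_apply,
      Complex.one_re, Complex.one_im, Complex.ofRealCLM_apply]
    push_cast
    have hs0 : (s : ℝ) ≠ 0 := hs.ne'
    field_simp
    norm_num [smul_eq_mul]
    ring
  have hf2 : fderiv ℝ u z Complex.I = ((Dv * z.im / s : ℝ) : ℂ) := by
    rw [hU.fderiv]
    simp only [ContinuousLinearMap.comp_apply, ContinuousLinearMap.smul_apply,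
      ContinuousLinearMap.add_apply, Complex.reCLM_apply, Complex.imCLM_apply,
      Complex.I_re, Complex.I_im, Complex.ofRealCLM_apply]
    push_cast
    field_simp
    norm_num [smul_eq_mul]
    ring
  have hsum : (Dv * z.re / s) ^ 2 + (Dv * z.im / s) ^ 2 = Dv ^ 2 := by
    have h1 : z.re ^ 2 + z.im ^ 2 = s ^ 2 := by rw [← hqz]; ring
    have h2 : (Dv * z.re / s) ^ 2 + (Dv * z.im / s) ^ 2
        = Dv ^ 2 * (z.re ^ 2 + z.im ^ 2) / s ^ 2 := by ring
    rw [h2, h1, mul_div_assoc, div_self (by positivity), mul_one]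
  refine ⟨?_, ?_, ?_⟩
  · rw [hu]
    simp only [Complex.norm_real, Real.norm_eq_abs]
    exact abs_of_pos (Real.rpow_pos_of_pos hBpos ν)
  · have : dzOp u z = (((Dv * z.re / s : ℝ) : ℂ)
        + (-1 : ℝ) • (Complex.I * ((Dv * z.im / s : ℝ) : ℂ))) / 2 := by
      rw [dzOp, hf1, hf2]; push_cast; simp only [neg_one_smul, one_smul]; try ring
    rw [this, abs_half_aux _ _ _ (Or.inr rfl), hsum, Real.sqrt_sq_eq_abs]
  · have : dbarOp u z = (((Dv * z.re / s : ℝ) : ℂ)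
        + (1 : ℝ) • (Complex.I * ((Dv * z.im / s : ℝ) : ℂ))) / 2 := by
      rw [dbarOp, hf1, hf2]; push_cast; simp only [neg_one_smul, one_smul]; try ring
    rw [this, abs_half_aux _ _ _ (Or.inl rfl), hsum, Real.sqrt_sq_eq_abs]

end Aux

section Main

open Real Set

set_option maxHeartbeats 1000000 in
theorem Ar_local_solution_weighted_Lp1 (r : ℕ) (hr : 3 ≤ r) (C : ℝ) (hC : 0 < C)
    (p : ℝ) (hp : 1 ≤ p) (u : ℂ → ℂ)
    (hu : u = fun z => ((((r : ℝ) ^ 2 * ((r : ℝ) - 2) * ‖z‖ ^ ((2 : ℝ) / r) + C)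
      ^ (-(1 : ℝ) / ((r : ℝ) - 2)) : ℝ) : ℂ)) :
    IntegrableOn
      (fun z => (‖u z‖ ^ p + ‖dzOp u z‖ ^ p
          + ‖dbarOp u z‖ ^ p) * ‖z‖ ^ (-(p / (r : ℝ))))
      (Metric.ball (0 : ℂ) 1)
    ↔ p < 2 / (1 - 1 / (r : ℝ)) := by
  have hrr3 : (3:ℝ) ≤ (r:ℝ) := by exact_mod_cast hr
  have hrr0 : (0:ℝ) < (r:ℝ) := by linarith
  set A : ℝ := (r:ℝ) ^ 2 * ((r:ℝ) - 2) with hAdef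
  set e2 : ℝ := (2:ℝ) / (r:ℝ) with he2def
  set ν : ℝ := -(1:ℝ) / ((r:ℝ) - 2) with hνdef
  have hA : 0 < A := by rw [hAdef]; nlinarith
  have he2 : 0 < e2 := by rw [he2def]; positivity
  have hν : ν < 0 := by
    rw [hνdef]
    apply div_neg_of_neg_of_pos
    · norm_num
    · linarith
  have hp0 : 0 < p := by linarith
  set a : ℝ := p / (r:ℝ) - p with hadef
  have h1r : 0 < 1 - 1 / (r:ℝ) := by
    rw [sub_pos, div_lt_one hrr0]; linarith
  have hmul : p * (1 - 1 / (r:ℝ)) = p - p / (r:ℝ) := by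
    rw [mul_sub, mul_one, mul_one_div]
  have hiff : (p < 2 / (1 - 1 / (r:ℝ))) ↔ -2 < a := by
    rw [lt_div_iff₀ h1r, hadef]
    constructor <;> intro h <;> linarith
  set c1 : ℝ := |ν| * (A + C) ^ (ν - 1) * A * e2 with hc1def
  set c2 : ℝ := |ν| * C ^ (ν - 1) * A * e2 with hc2def
  have hνne : 0 < |ν| := abs_pos.mpr (ne_of_lt hν)
  have hc1 : 0 < c1 := by rw [hc1def]; positivity
  have hc2 : 0 < c2 := by rw [hc2def]; positivity
  set K1 : ℝ := (C ^ ν) ^ p with hK1def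
  have hK1 : 0 < K1 := by rw [hK1def]; positivity
  set Cu : ℝ := K1 + 2 * (c2 / 2) ^ p with hCudef
  set Cl : ℝ := (c1 / 2) ^ p with hCldef
  have hCu : 0 < Cu := by rw [hCudef]; positivity
  have hCl : 0 < Cl := by rw [hCldef]; positivity
  have hexp : (e2 - 1) * p + -(p / (r:ℝ)) = a := by
    rw [he2def, hadef]; field_simp; ring
  have haw : a ≤ -(p / (r:ℝ)) := by
    have h2 : p / (r:ℝ) ≤ p / 2 := by
      rw [div_le_div_iff₀ hrr0 two_pos]; nlinarith
    rw [hadef]; linarith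
  -- pointwise bounds
  have key : ∀ z : ℂ, z ∈ Metric.ball (0:ℂ) 1 → z ≠ 0 →
      Cl * ‖z‖ ^ a ≤ (‖u z‖ ^ p + ‖dzOp u z‖ ^ p
          + ‖dbarOp u z‖ ^ p) * ‖z‖ ^ (-(p / (r:ℝ))) ∧
      (‖u z‖ ^ p + ‖dzOp u z‖ ^ p
          + ‖dbarOp u z‖ ^ p) * ‖z‖ ^ (-(p / (r:ℝ)))
        ≤ Cu * ‖z‖ ^ a := by
    intro z hzb hz0
    obtain ⟨hv0, hv1, hv2⟩ := radial_vals A C e2 ν hA hC he2 u hu z hz0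
    set s : ℝ := ‖z‖ with hsdef
    have hs0 : 0 < s := norm_pos_iff.mpr hz0
    have hs1 : s < 1 := by
      have := Metric.mem_ball.mp hzb
      rwa [Complex.dist_eq, sub_zero] at this
    have hse2 : s ^ e2 ≤ 1 := Real.rpow_le_one hs0.le hs1.le he2.le
    have hse2nn : 0 ≤ s ^ e2 := Real.rpow_nonneg hs0.le e2
    have hB1 : C ≤ A * s ^ e2 + C := by nlinarith
    have hB2 : A * s ^ e2 + C ≤ A + C := by nlinarith
    have hBpos : 0 < A * s ^ e2 + C := by positivity
    have hDabs : |ν * (A * s ^ e2 + C) ^ (ν - 1) * (A * (e2 * s ^ (e2 - 1)))|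
        = |ν| * ((A * s ^ e2 + C) ^ (ν - 1) * (A * (e2 * s ^ (e2 - 1)))) := by
      rw [mul_assoc, abs_mul, abs_mul, abs_of_pos (Real.rpow_pos_of_pos hBpos _),
        abs_of_pos (by positivity : (0:ℝ) < A * (e2 * s ^ (e2 - 1)))]
    have hXu : (A * s ^ e2 + C) ^ (ν - 1) ≤ C ^ (ν - 1) :=
      Real.rpow_le_rpow_of_nonpos hC hB1 (by linarith)
    have hXl : (A + C) ^ (ν - 1) ≤ (A * s ^ e2 + C) ^ (ν - 1) :=
      Real.rpow_le_rpow_of_nonpos hBpos hB2 (by linarith)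
    have hKpos : (0:ℝ) < A * (e2 * s ^ (e2 - 1)) := by positivity
    have hDub : |ν * (A * s ^ e2 + C) ^ (ν - 1) * (A * (e2 * s ^ (e2 - 1)))|
        ≤ c2 * s ^ (e2 - 1) := by
      rw [hDabs, hc2def]
      have h2 := mul_le_mul_of_nonneg_left
        (mul_le_mul_of_nonneg_right hXu hKpos.le) (abs_nonneg ν)
      calc |ν| * ((A * s ^ e2 + C) ^ (ν - 1) * (A * (e2 * s ^ (e2 - 1))))
          ≤ |ν| * (C ^ (ν - 1) * (A * (e2 * s ^ (e2 - 1)))) := h2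
        _ = |ν| * C ^ (ν - 1) * A * e2 * s ^ (e2 - 1) := by ring
    have hDlb : c1 * s ^ (e2 - 1)
        ≤ |ν * (A * s ^ e2 + C) ^ (ν - 1) * (A * (e2 * s ^ (e2 - 1)))| := by
      rw [hDabs, hc1def]
      have h2 := mul_le_mul_of_nonneg_left
        (mul_le_mul_of_nonneg_right hXl hKpos.le) (abs_nonneg ν)
      calc |ν| * (A + C) ^ (ν - 1) * A * e2 * s ^ (e2 - 1)
          = |ν| * ((A + C) ^ (ν - 1) * (A * (e2 * s ^ (e2 - 1)))) := by ring
        _ ≤ |ν| * ((A * s ^ e2 + C) ^ (ν - 1) * (A * (e2 * s ^ (e2 - 1)))) := h2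
    have hWnn : (0:ℝ) ≤ s ^ (-(p / (r:ℝ))) := Real.rpow_nonneg hs0.le _
    have hWle : s ^ (-(p / (r:ℝ))) ≤ s ^ a :=
      Real.rpow_le_rpow_of_exponent_ge hs0 hs1.le haw
    have hprod : s ^ ((e2 - 1) * p) * s ^ (-(p / (r:ℝ))) = s ^ a := by
      rw [← Real.rpow_add hs0, hexp]
    have hT0 : ‖u z‖ ^ p ≤ K1 := by
      rw [hv0, hK1def]
      exact Real.rpow_le_rpow (Real.rpow_nonneg hBpos.le ν)
        (Real.rpow_le_rpow_of_nonpos hC hB1 hν.le) hp0.le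
    have hT0nn : 0 ≤ ‖u z‖ ^ p := Real.rpow_nonneg (norm_nonneg _) p
    have hpow2 : ((c2 * s ^ (e2 - 1)) / 2) ^ p = (c2 / 2) ^ p * s ^ ((e2 - 1) * p) := by
      rw [show (c2 * s ^ (e2 - 1)) / 2 = (c2 / 2) * s ^ (e2 - 1) from by ring,
        Real.mul_rpow (by positivity) (Real.rpow_nonneg hs0.le _), ← Real.rpow_mul hs0.le]
    have hpow1 : ((c1 * s ^ (e2 - 1)) / 2) ^ p = (c1 / 2) ^ p * s ^ ((e2 - 1) * p) := by
      rw [show (c1 * s ^ (e2 - 1)) / 2 = (c1 / 2) * s ^ (e2 - 1) from by ring,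
        Real.mul_rpow (by positivity) (Real.rpow_nonneg hs0.le _), ← Real.rpow_mul hs0.le]
    have hT1ub : ‖dzOp u z‖ ^ p ≤ (c2 / 2) ^ p * s ^ ((e2 - 1) * p) := by
      rw [hv1, ← hpow2]
      exact Real.rpow_le_rpow (by positivity) (by linarith) hp0.le
    have hT2ub : ‖dbarOp u z‖ ^ p ≤ (c2 / 2) ^ p * s ^ ((e2 - 1) * p) := by
      rw [hv2, ← hpow2]
      exact Real.rpow_le_rpow (by positivity) (by linarith) hp0.le
    have hT1lb : (c1 / 2) ^ p * s ^ ((e2 - 1) * p) ≤ ‖dzOp u z‖ ^ p := by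
      rw [hv1, ← hpow1]
      exact Real.rpow_le_rpow (by positivity) (by linarith) hp0.le
    have hT2nn : 0 ≤ ‖dbarOp u z‖ ^ p := Real.rpow_nonneg (norm_nonneg _) p
    have hT1nn : 0 ≤ ‖dzOp u z‖ ^ p := Real.rpow_nonneg (norm_nonneg _) p
    constructor
    · calc Cl * s ^ a = (c1 / 2) ^ p * (s ^ ((e2 - 1) * p) * s ^ (-(p / (r:ℝ)))) := by
            rw [hCldef, hprod]
        _ = ((c1 / 2) ^ p * s ^ ((e2 - 1) * p)) * s ^ (-(p / (r:ℝ))) := by ring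
        _ ≤ (‖dzOp u z‖ ^ p) * s ^ (-(p / (r:ℝ))) :=
            mul_le_mul_of_nonneg_right hT1lb hWnn
        _ ≤ (‖u z‖ ^ p + ‖dzOp u z‖ ^ p
              + ‖dbarOp u z‖ ^ p) * s ^ (-(p / (r:ℝ))) :=
            mul_le_mul_of_nonneg_right (by linarith) hWnn
    · calc (‖u z‖ ^ p + ‖dzOp u z‖ ^ p
              + ‖dbarOp u z‖ ^ p) * s ^ (-(p / (r:ℝ)))
          ≤ (K1 + ((c2 / 2) ^ p * s ^ ((e2 - 1) * p)
              + (c2 / 2) ^ p * s ^ ((e2 - 1) * p))) * s ^ (-(p / (r:ℝ))) :=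
            mul_le_mul_of_nonneg_right (by linarith) hWnn
        _ = K1 * s ^ (-(p / (r:ℝ)))
            + 2 * ((c2 / 2) ^ p * (s ^ ((e2 - 1) * p) * s ^ (-(p / (r:ℝ))))) := by ring
        _ ≤ K1 * s ^ a + 2 * ((c2 / 2) ^ p * s ^ a) := by
            rw [hprod]
            have := mul_le_mul_of_nonneg_left hWle hK1.le
            linarith
        _ = Cu * s ^ a := by rw [hCudef]; ring
  -- measurability
  have mabs : Measurable fun z : ℂ => ‖z‖ := continuous_norm.measurable
  have mu : Measurable u := by
    rw [hu]
    apply Complex.measurable_ofReal.comp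
    fun_prop
  have mdz : Measurable (dzOp u) := by
    unfold dzOp
    exact ((measurable_fderiv_apply_const ℝ u 1).sub
      ((measurable_fderiv_apply_const ℝ u Complex.I).const_mul Complex.I)).div_const 2
  have mdb : Measurable (dbarOp u) := by
    unfold dbarOp
    exact ((measurable_fderiv_apply_const ℝ u 1).add
      ((measurable_fderiv_apply_const ℝ u Complex.I).const_mul Complex.I)).div_const 2
  have mF : Measurable (fun z : ℂ => (‖u z‖ ^ p + ‖dzOp u z‖ ^ p
      + ‖dbarOp u z‖ ^ p) * ‖z‖ ^ (-(p / (r:ℝ)))) := by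
    have h1 : Measurable fun z : ℂ => ‖u z‖ := mabs.comp mu
    have h2 : Measurable fun z : ℂ => ‖dzOp u z‖ := mabs.comp mdz
    have h3 : Measurable fun z : ℂ => ‖dbarOp u z‖ := mabs.comp mdb
    fun_prop
  -- a.e. facts
  have haeball : ∀ᵐ z ∂(volume.restrict (Metric.ball (0:ℂ) 1)), z ∈ Metric.ball (0:ℂ) 1 :=
    ae_restrict_mem measurableSet_ball
  have haene : ∀ᵐ z ∂(volume.restrict (Metric.ball (0:ℂ) 1)), z ≠ (0:ℂ) := by
    refine ae_restrict_of_ae ?_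
    have hset : {z : ℂ | ¬ z ≠ 0} = {0} := by ext w; simp
    rw [ae_iff, hset]
    exact measure_singleton 0
  constructor
  · intro H
    have hint2 : IntegrableOn (fun z : ℂ => Cl * ‖z‖ ^ a) (Metric.ball (0:ℂ) 1) := by
      refine Integrable.mono' H ?_ ?_
      · exact ((by fun_prop : Measurable fun z : ℂ => Cl * ‖z‖ ^ a)).aestronglyMeasurable
      · filter_upwards [haeball, haene] with z hzb hz0
        rw [Real.norm_eq_abs, abs_of_nonneg (by positivity)]
        exact (key z hzb hz0).1
    have hint : IntegrableOn (fun z : ℂ => ‖z‖ ^ a) (Metric.ball (0:ℂ) 1) := by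
      have h2 := hint2.const_mul Cl⁻¹
      refine h2.congr (Filter.Eventually.of_forall fun z => ?_)
      simp [← mul_assoc, inv_mul_cancel₀ hCl.ne']
    exact hiff.mpr ((model_complex a).mp hint)
  · intro hlt
    have ha2 : -2 < a := hiff.mp hlt
    have hint : IntegrableOn (fun z : ℂ => ‖z‖ ^ a) (Metric.ball (0:ℂ) 1) :=
      (model_complex a).mpr ha2
    refine Integrable.mono' (hint.const_mul Cu) mF.aestronglyMeasurable ?_
    filter_upwards [haeball, haene] with z hzb hz0
    rw [Real.norm_eq_abs, abs_of_nonneg (by positivity)]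
    exact (key z hzb hz0).2

end Main
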